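/- Let f, g_1, …, g_m : ℝ → ℝ be continuously differentiable with f'(0) ≠ 0, and suppose there exist ρ_1,…,ρ_p, γ_1,…,γ_p ∈ ℝ^n with γ_1,…,γ_p distinct and det(g_1(ρ_i · γ_j))_{1≤i,j≤p} ≠ 0. Define the three-layer network output o_{v,s,w,t}(x) = f(s + ∑_{k=1}^m v_k g_k(t_k + ∑_{l=1}^n w_l^k x_l)) with parameter space ℝ^{m(n+2)+1}. If p > m(n+2)+1, then there is no continuously differentiable map Π : U_p → ℝ^{m(n+2)+1} (where U_p is the set of training data ((γ_1,ζ_1),…,(γ_p,ζ_p)) ∈ ℝ^{p(n+1)} with distinct γ_i) such that for every training data set for which the quadratic error E(v,s,w,t) = ∑_{i=1}^p (ζ_i − o_{v,s,w,t}(γ_i))² attains a global minimum, Π returns a global minimizer. -/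

import Mathlib

/-- Parameter space of a three-layer network: weights `v`, threshold `s`,
weight matrix `w`, thresholds `t`; in total `m*(n+2)+1` real parameters. -/
abbrev NNParams (m n : ℕ) :=
  (Fin m → ℝ) × ℝ × (Fin m → Fin n → ℝ) × (Fin m → ℝ)

/-- Output of the three-layer network `o_{v,s,w,t}(x) = f(s + ∑ v_k g_k(t_k + ∑ w_l^k x_l))`. -/
def netOutput (m n : ℕ) (f : ℝ → ℝ) (g : Fin m → ℝ → ℝ)
    (q : NNParams m n) (x : Fin n → ℝ) : ℝ :=
  f (q.2.1 + ∑ k, q.1 k * g k (q.2.2.2 k + ∑ l, q.2.2.1 k l * x l))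

/-- Quadratic error of parameters `q` on the training data `d`. -/
def netErr (m n p : ℕ) (f : ℝ → ℝ) (g : Fin m → ℝ → ℝ)
    (d : Fin p → (Fin n → ℝ) × ℝ) (q : NNParams m n) : ℝ :=
  ∑ i, ((d i).2 - netOutput m n f g q (d i).1) ^ 2

theorem stmt10 (m n p : ℕ) (hm : 0 < m)
    (f : ℝ → ℝ) (g : Fin m → ℝ → ℝ)
    (hf : ContDiff ℝ 1 f) (hg : ∀ k, ContDiff ℝ 1 (g k))
    (hf0 : deriv f 0 ≠ 0)
    (hdet : ∃ ρ γ : Fin p → (Fin n → ℝ), Function.Injective γ ∧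
      Matrix.det (Matrix.of fun i j : Fin p =>
        g ⟨0, hm⟩ (∑ l, ρ i l * γ j l)) ≠ 0)
    (hp : p > m * (n + 2) + 1) :
    ¬ ∃ Spec : (Fin p → (Fin n → ℝ) × ℝ) → NNParams m n,
      ContDiffOn ℝ 1 Spec {d | Function.Injective fun i => (d i).1} ∧
      ∀ d : Fin p → (Fin n → ℝ) × ℝ, (Function.Injective fun i => (d i).1) →
        (∃ q : NNParams m n, ∀ q' : NNParams m n,
            netErr m n p f g d q ≤ netErr m n p f g d q') →
        ∀ q' : NNParams m n, netErr m n p f g d (Spec d) ≤ netErr m n p f g d q' := by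
  rintro ⟨Spec, hSpec, hmin⟩
  obtain ⟨ρ, γ, hγ, hdet⟩ := hdet
  set k0 : Fin m := ⟨0, hm⟩
  set M : Matrix (Fin p) (Fin p) ℝ :=
    Matrix.of fun i j : Fin p => g k0 (∑ l, ρ i l * γ j l) with hM
  -- setup
  set S : Set (Fin p → (Fin n → ℝ) × ℝ) := {d | Function.Injective fun i => (d i).1} with hSdef
  have hS_open : IsOpen S := by
    have : S = ⋂ (i : Fin p) (j : Fin p) (_ : i ≠ j),
        {d : Fin p → (Fin n → ℝ) × ℝ | (d i).1 ≠ (d j).1} := by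
      ext d
      simp only [hSdef, Set.mem_setOf_eq, Set.mem_iInter]
      constructor
      · intro h i j hij
        exact fun he => hij (h he)
      · intro h a b hab
        by_contra hne
        exact h a b hne hab
    rw [this]
    refine isOpen_iInter_of_finite fun i => isOpen_iInter_of_finite fun j =>
      isOpen_iInter_of_finite fun _ => ?_
    have hc : Continuous fun d : Fin p → (Fin n → ℝ) × ℝ => ((d i).1, (d j).1) := by fun_prop
    exact isClosed_diagonal.isOpen_compl.preimage hc
  set dat : (Fin p → ℝ) → (Fin p → (Fin n → ℝ) × ℝ) := fun ζ i => (γ i, ζ i) with hdat_def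
  have hdat_mem : ∀ ζ, dat ζ ∈ S := fun ζ => hγ
  set eval : NNParams m n → (Fin p → ℝ) := fun q j => netOutput m n f g q (γ j) with heval_def
  have hf' := hf.differentiable one_ne_zero
  have hg' := fun k => (hg k).differentiable one_ne_zero
  have heval_diff : Differentiable ℝ eval := by
    rw [heval_def]
    unfold netOutput
    apply differentiable_pi.2
    intro j
    apply hf'.comp
    apply Differentiable.add
    · fun_prop
    · apply Differentiable.fun_sum
      intro k _
      apply Differentiable.mul
      · fun_prop
      · apply (hg' k).comp
        apply Differentiable.add
        · fun_prop
        · apply Differentiable.fun_sum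
          intro l _
          fun_prop
  have hdat_diff : Differentiable ℝ dat := by
    rw [hdat_def]; fun_prop
  set ζ0 : Fin p → ℝ := fun _ => f 0 with hζ0
  have hSd : DifferentiableAt ℝ Spec (dat ζ0) :=
    (hSpec.differentiableOn one_ne_zero).differentiableAt (hS_open.mem_nhds (hdat_mem ζ0))
  have hSdat : DifferentiableAt ℝ (fun ζ => Spec (dat ζ)) ζ0 :=
    DifferentiableAt.comp ζ0 hSd (hdat_diff ζ0)
  set B := fderiv ℝ (fun ζ => Spec (dat ζ)) ζ0 with hB_def
  set A := fderiv ℝ eval (Spec (dat ζ0)) with hA_def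
  set D := A.comp B with hD_def
  have hF : HasFDerivAt (fun ζ => eval (Spec (dat ζ))) D ζ0 :=
    HasFDerivAt.comp ζ0 (heval_diff _).hasFDerivAt hSdat.hasFDerivAt
  -- the fixed-point property along the realizable curves
  have hfix : ∀ (i : Fin p) (r : ℝ),
      eval (Spec (dat (fun j => f (r * M i j)))) = fun j => f (r * M i j) := by
    intro i r
    set ζ : Fin p → ℝ := fun j => f (r * M i j) with hζ
    -- the witness parameter realizing ζ exactly
    set q : NNParams m n :=
      (fun k => if k = k0 then r else 0, 0,
       fun k l => if k = k0 then ρ i l else 0, fun _ => 0) with hq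
    have hout : ∀ j, netOutput m n f g q (γ j) = ζ j := by
      intro j
      unfold netOutput
      rw [hζ]
      congr 1
      rw [hq]
      simp only [zero_add]
      rw [Finset.sum_eq_single k0]
      · simp [hM]
      · intro k _ hk
        simp [hk]
      · simp
    have herr : netErr m n p f g (dat ζ) q = 0 := by
      unfold netErr
      apply Finset.sum_eq_zero
      intro j _
      rw [hdat_def]
      simp only
      rw [hout j, sub_self]
      ring
    have hnonneg : ∀ q' : NNParams m n, 0 ≤ netErr m n p f g (dat ζ) q' := by
      intro q'
      exact Finset.sum_nonneg fun j _ => sq_nonneg _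
    have hminex : ∃ q0 : NNParams m n, ∀ q' : NNParams m n,
        netErr m n p f g (dat ζ) q0 ≤ netErr m n p f g (dat ζ) q' := by
      exact ⟨q, fun q' => herr ▸ hnonneg q'⟩
    have hle := hmin (dat ζ) (hdat_mem ζ) hminex q
    rw [herr] at hle
    have heq0 : netErr m n p f g (dat ζ) (Spec (dat ζ)) = 0 :=
      le_antisymm hle (hnonneg _)
    have hterm : ∀ j ∈ Finset.univ, ((dat ζ j).2 - netOutput m n f g (Spec (dat ζ)) (dat ζ j).1) ^ 2 = 0 := by
      rw [← Finset.sum_eq_zero_iff_of_nonneg fun j _ => sq_nonneg _]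
      exact heq0
    funext j
    have := hterm j (Finset.mem_univ j)
    rw [pow_eq_zero_iff (by norm_num), sub_eq_zero] at this
    rw [heval_def]
    simp only [hdat_def] at this ⊢
    exact this.symm
  -- D fixes the spanning vectors
  have hDfix : ∀ i : Fin p, D (fun j => deriv f 0 * M i j) = fun j => deriv f 0 * M i j := by
    intro i
    set c : ℝ → (Fin p → ℝ) := fun r j => f (r * M i j) with hc_def
    have hc0 : c 0 = ζ0 := by
      funext j; simp [hc_def, hζ0]
    have hcd : HasDerivAt c (fun j => deriv f 0 * M i j) 0 := by
      rw [hasDerivAt_pi]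
      intro j
      have h1 : HasDerivAt (fun r : ℝ => r * M i j) (M i j) 0 := by
        simpa using (hasDerivAt_id (0:ℝ)).mul_const (M i j)
      have h2 : HasDerivAt f (deriv f 0) ((fun r : ℝ => r * M i j) 0) := by
        rw [show (fun r : ℝ => r * M i j) 0 = 0 by simp]
        exact (hf' 0).hasDerivAt
      simpa [mul_comm, hc_def, Function.comp_def] using h2.comp 0 h1
    have hFc : HasDerivAt (fun r => eval (Spec (dat (c r)))) (D (fun j => deriv f 0 * M i j)) 0 := by
      have hF' := hF
      rw [← hc0] at hF'
      exact hF'.comp_hasDerivAt 0 hcd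
    have hFc' : (fun r => eval (Spec (dat (c r)))) = c := by
      funext r
      exact hfix i r
    rw [hFc'] at hFc
    exact (hcd.unique hFc).symm
  -- D is the identity, since the vectors span
  have hMdet : IsUnit (Matrix.transpose M) :=
    (Matrix.isUnit_iff_isUnit_det _).2 (by rw [Matrix.det_transpose]; exact isUnit_iff_ne_zero.2 hdet)
  have hsurj : Function.Surjective (Matrix.transpose M).mulVec :=
    Matrix.mulVec_surjective_iff_isUnit.2 hMdet
  have hDid : ∀ x : Fin p → ℝ, D x = x := by
    intro x
    obtain ⟨y, hy⟩ := hsurj x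
    have hx : x = ∑ i, (y i / deriv f 0) • (fun j => deriv f 0 * M i j) := by
      funext j
      rw [← hy]
      simp only [Matrix.mulVec, dotProduct, Matrix.transpose_apply,
        Finset.sum_apply, Pi.smul_apply, smul_eq_mul]
      apply Finset.sum_congr rfl
      intro i _
      field_simp
    rw [hx, map_sum]
    apply Finset.sum_congr rfl
    intro i _
    rw [map_smul, hDfix i]
  -- rank contradiction
  have hrange : LinearMap.range (D : (Fin p → ℝ) →ₗ[ℝ] (Fin p → ℝ)) = ⊤ := by
    rw [LinearMap.range_eq_top]
    exact fun x => ⟨x, hDid x⟩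
  have h1 : Module.finrank ℝ (Fin p → ℝ) =
      Module.finrank ℝ (LinearMap.range (D : (Fin p → ℝ) →ₗ[ℝ] (Fin p → ℝ))) := by
    rw [hrange, finrank_top]
  have h2 : LinearMap.range (D : (Fin p → ℝ) →ₗ[ℝ] (Fin p → ℝ)) ≤
      LinearMap.range (A : NNParams m n →ₗ[ℝ] (Fin p → ℝ)) := by
    rw [hD_def]
    exact LinearMap.range_comp_le_range _ _
  have h3 : Module.finrank ℝ (LinearMap.range (A : NNParams m n →ₗ[ℝ] (Fin p → ℝ))) ≤
      Module.finrank ℝ (NNParams m n) := LinearMap.finrank_range_le _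
  have h4 : Module.finrank ℝ (NNParams m n) = m * (n + 2) + 1 := by
    simp [NNParams, Module.finrank_prod, Module.finrank_pi, Module.finrank_pi_fintype]
    ring
  have h5 : Module.finrank ℝ (Fin p → ℝ) = p := by
    simp [Module.finrank_pi]
  have := le_trans (h1.le.trans (Submodule.finrank_mono h2)) h3
  rw [h4, h5] at this
  omega
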